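/- arXiv:2411.02719 — 4 statements merged into one kernel-verified Lean document; each statement's English description precedes it below -/
import Mathlib

section
/- Let T_p > 0 and define k(t) = sec²(πt/(2T_p)) for t ∈ [0, T_p). Let θ > 0 and let V : [0, T_p) → ℝ be differentiable with V(0) > 0 and V'(t) = −θ·k(t)·V(t) for all t ∈ [0, T_p). Then V(t) = V(0)·exp(−(2θT_p/π)·tan(πt/(2T_p))) for all t ∈ [0, T_p), and V(t) → 0 as t → T_p from the left (prescribed-time stability at the prescribed time T_p). -/
open Real Set Filter Topology

/-- Lemma 3.1, prescribed-time stability of `V̇ = -θ k(t) V`.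
If `V' (t) = -θ k(t) V(t)` on `[0, T_p)` with `k(t) = sec²(π t/(2 T_p))`, `θ > 0`,
`V(0) > 0`, then `V(t) = V(0) exp(-(2θT_p/π) tan(π t/(2T_p)))` and `V(t) → 0`
as `t → T_p⁻`. -/
theorem stmt0 (Tp : ℝ) (hTp : 0 < Tp) (θ : ℝ) (hθ : 0 < θ)
    (V : ℝ → ℝ) (hV0 : 0 < V 0)
    (hV : ∀ t ∈ Ico (0 : ℝ) Tp,
      HasDerivWithinAt V (-θ * (1 / cos (π * t / (2 * Tp)) ^ 2) * V t) (Ico 0 Tp) t) :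
    (∀ t ∈ Ico (0 : ℝ) Tp,
      V t = V 0 * exp (-(2 * θ * Tp / π) * tan (π * t / (2 * Tp)))) ∧
    Tendsto V (nhdsWithin Tp (Iio Tp)) (nhds 0) := by
  have hπ : (0:ℝ) < π := Real.pi_pos
  set g : ℝ → ℝ := fun t => (2 * θ * Tp / π) * tan (π * t / (2 * Tp)) with hg
  -- cos positive on Ico
  have hcos : ∀ t ∈ Ico (0:ℝ) Tp, 0 < cos (π * t / (2 * Tp)) := by
    intro t ht
    apply Real.cos_pos_of_mem_Ioo
    constructor
    · have : (0:ℝ) ≤ π * t / (2 * Tp) :=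
        div_nonneg (mul_nonneg hπ.le ht.1) (by linarith)
      linarith
    · rw [div_lt_iff₀ (by linarith)]
      have : π * t < π * Tp := by
        apply mul_lt_mul_of_pos_left ht.2 hπ
      nlinarith
  -- derivative of g
  have hgderiv : ∀ t ∈ Ico (0:ℝ) Tp,
      HasDerivAt g (θ * (1 / cos (π * t / (2 * Tp)) ^ 2)) t := by
    intro t ht
    have hc := (hcos t ht).ne'
    have h1 : HasDerivAt (fun t : ℝ => π * t / (2 * Tp)) (π / (2 * Tp)) t := by
      have := (hasDerivAt_id t).const_mul π
      simpa [mul_div_assoc] using this.div_const (2 * Tp)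
    have h2 := (Real.hasDerivAt_tan hc).comp t h1
    have h3 := h2.const_mul (2 * θ * Tp / π)
    refine h3.congr_deriv ?_
    field_simp
  -- F = V * exp ∘ g has zero derivative
  set F : ℝ → ℝ := fun t => V t * exp (g t) with hF
  have hFderiv : ∀ t ∈ Ico (0:ℝ) Tp, HasDerivWithinAt F 0 (Ico 0 Tp) t := by
    intro t ht
    have h1 := hV t ht
    have h2 := ((hgderiv t ht).exp).hasDerivWithinAt (s := Ico (0:ℝ) Tp)
    have h3 := h1.mul h2
    refine h3.congr_deriv ?_
    ring
  have hconst : ∀ t ∈ Ico (0:ℝ) Tp, F t = F 0 := by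
    intro t ht
    have h0 : (0:ℝ) ∈ Ico (0:ℝ) Tp := ⟨le_refl _, hTp⟩
    refine ((convex_Ico (0:ℝ) Tp).is_const_of_fderivWithin_eq_zero (𝕜 := ℝ)
      (f := F) (fun x hx => (hFderiv x hx).differentiableWithinAt) ?_ ht h0)
    intro x hx
    have := (hFderiv x hx).hasFDerivWithinAt.fderivWithin
      ((uniqueDiffOn_Ico 0 Tp) x hx)
    rw [this]
    ext v
    simp [ContinuousLinearMap.smulRight_apply]
  have hformula : ∀ t ∈ Ico (0:ℝ) Tp,
      V t = V 0 * exp (-(2 * θ * Tp / π) * tan (π * t / (2 * Tp))) := by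
    intro t ht
    have h := hconst t ht
    have hF0 : F 0 = V 0 := by
      simp [hF, hg, mul_div_assoc]
    rw [hF0] at h
    have hexp : exp (g t) ≠ 0 := (Real.exp_pos _).ne'
    have h2 : V t = V 0 * exp (-(g t)) := by
      rw [Real.exp_neg]
      field_simp
      linear_combination h
    rw [h2, hg]
    ring_nf
  refine ⟨hformula, ?_⟩
  -- limit
  have hmem : ∀ᶠ t in 𝓝[<] Tp, t ∈ Ico (0:ℝ) Tp := by
    filter_upwards [eventually_nhdsWithin_of_eventually_nhds
      (eventually_gt_nhds hTp), self_mem_nhdsWithin] with t h1 h2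
    exact ⟨h1.le, h2⟩
  have htan : Tendsto (fun t => tan (π * t / (2 * Tp))) (𝓝[<] Tp) atTop := by
    apply Real.tendsto_tan_pi_div_two.comp
    apply tendsto_nhdsWithin_of_tendsto_nhds_of_eventually_within
    · have : Tendsto (fun t : ℝ => π * t / (2 * Tp)) (𝓝 Tp) (𝓝 (π * Tp / (2 * Tp))) :=
        (Continuous.div_const (continuous_const.mul continuous_id) _).tendsto Tp
      have heq : π * Tp / (2 * Tp) = π / 2 := by
        field_simp
      rw [heq] at this
      exact this.mono_left nhdsWithin_le_nhds
    · filter_upwards [self_mem_nhdsWithin] with t (ht : t < Tp)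
      have : π * t / (2 * Tp) < π / 2 := by
        rw [div_lt_div_iff₀ (by linarith) (by norm_num)]
        nlinarith
      exact this
  have hexp0 : Tendsto (fun t => V 0 * exp (-(2 * θ * Tp / π) * tan (π * t / (2 * Tp))))
      (𝓝[<] Tp) (𝓝 0) := by
    have h1 : Tendsto (fun t => (2 * θ * Tp / π) * tan (π * t / (2 * Tp))) (𝓝[<] Tp) atTop :=
      htan.const_mul_atTop (by positivity)
    have h2 : Tendsto (fun t => exp (-((2 * θ * Tp / π) * tan (π * t / (2 * Tp)))))
        (𝓝[<] Tp) (𝓝 0) :=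
      Real.tendsto_exp_atBot.comp (tendsto_neg_atBot_iff.mpr h1)
    have := h2.const_mul (V 0)
    simpa [neg_mul, mul_zero] using this
  refine hexp0.congr' ?_
  filter_upwards [hmem] with t ht
  exact (hformula t ht).symm
end

section
/- Let T_p > 0 and define k(t) = sec²(πt/(2T_p)) for t ∈ [0, T_p). Let E be a finite-dimensional real normed vector space, let x : [0, T_p) → E, let M > 0 and θ > 0, and let V : [0, T_p) → ℝ be differentiable with V(t) ≥ M·‖x(t)‖² for all t ∈ [0, T_p) and V'(t) ≤ −θ·k(t)·V(t) for all t ∈ [0, T_p). Then x(t) → 0 as t → T_p from the left; i.e., x is prescribed-time stable to the origin at time T_p. -/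
open Real Set Filter Topology

/-- Corollary 1, prescribed-time stability via a Lyapunov function.
If `V(t) ≥ M‖x(t)‖²` and `V'(t) ≤ -θ k(t) V(t)` on `[0, T_p)` with
`k(t) = sec²(π t/(2T_p))`, `M, θ > 0`, then `x(t) → 0` as `t → T_p⁻`. -/
theorem stmt2 {E : Type*} [NormedAddCommGroup E] [NormedSpace ℝ E] [FiniteDimensional ℝ E]
    (Tp : ℝ) (hTp : 0 < Tp) (M θ : ℝ) (hM : 0 < M) (hθ : 0 < θ)
    (x : ℝ → E) (V V' : ℝ → ℝ)
    (hVx : ∀ t ∈ Ico (0 : ℝ) Tp, M * ‖x t‖ ^ 2 ≤ V t)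
    (hV : ∀ t ∈ Ico (0 : ℝ) Tp, HasDerivWithinAt V (V' t) (Ico 0 Tp) t)
    (hV' : ∀ t ∈ Ico (0 : ℝ) Tp, V' t ≤ -θ * (1 / cos (π * t / (2 * Tp)) ^ 2) * V t) :
    Tendsto x (nhdsWithin Tp (Iio Tp)) (nhds 0) := by
  set c : ℝ := π / (2 * Tp) with hc_def
  have hc : 0 < c := div_pos pi_pos (by linarith)
  have hcTp : c * Tp = π / 2 := by
    rw [hc_def]; field_simp
  have harg : ∀ t, π * t / (2 * Tp) = c * t := by
    intro t; rw [hc_def]; field_simp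
  have hcos : ∀ t ∈ Ico (0 : ℝ) Tp, 0 < cos (c * t) := by
    intro t ht
    apply Real.cos_pos_of_mem_Ioo
    constructor
    · have : 0 ≤ c * t := mul_nonneg hc.le ht.1
      linarith [pi_pos]
    · calc c * t < c * Tp := by exact mul_lt_mul_of_pos_left ht.2 hc
        _ = π / 2 := hcTp
  -- the auxiliary function g = V * exp((θ/c) tan (c t))
  set g : ℝ → ℝ := fun t => V t * exp (θ / c * tan (c * t)) with hg_def
  -- exp factor derivative
  have hexp : ∀ t ∈ Ico (0 : ℝ) Tp,
      HasDerivAt (fun s => exp (θ / c * tan (c * s)))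
        (exp (θ / c * tan (c * t)) * (θ / c * (1 / cos (c * t) ^ 2 * c))) t := by
    intro t ht
    have hcos' : cos (c * t) ≠ 0 := (hcos t ht).ne'
    have htan : HasDerivAt (fun s => tan (c * s)) (1 / cos (c * t) ^ 2 * c) t := by
      have h1 : HasDerivAt (fun s : ℝ => c * s) c t := by
        simpa using (hasDerivAt_id t).const_mul c
      exact (Real.hasDerivAt_tan hcos').comp t h1
    exact (htan.const_mul (θ / c)).exp
  -- g is antitone on Ico 0 Tp
  have hanti : AntitoneOn g (Ico 0 Tp) := by
    apply antitoneOn_of_hasDerivWithinAt_nonpos (convex_Ico 0 Tp)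
      (f' := fun t => V' t * exp (θ / c * tan (c * t)) +
        exp (θ / c * tan (c * t)) * (θ / c * (1 / cos (c * t) ^ 2 * c)) * V t)
    · intro t ht
      exact (hV t ht).continuousWithinAt.mul (hexp t ht).continuousAt.continuousWithinAt
    · intro t ht
      rw [interior_Ico] at ht
      have ht' : t ∈ Ico (0 : ℝ) Tp := Ioo_subset_Ico_self ht
      have : HasDerivWithinAt (fun s => V s * exp (θ / c * tan (c * s))) (V' t * exp (θ / c * tan (c * t)) + V t * (exp (θ / c * tan (c * t)) * (θ / c * (1 / cos (c * t) ^ 2 * c)))) (Ioo 0 Tp) t := ((hV t ht').mono Ioo_subset_Ico_self).mul ((hexp t ht').hasDerivWithinAt)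
      rw [interior_Ico]
      convert this using 1
      ring
    · intro t ht
      rw [interior_Ico] at ht
      have ht' : t ∈ Ico (0 : ℝ) Tp := Ioo_subset_Ico_self ht
      have hE : 0 < exp (θ / c * tan (c * t)) := exp_pos _
      have h1 : V' t ≤ -θ * (1 / cos (c * t) ^ 2) * V t := by
        have := hV' t ht'
        rwa [harg t] at this
      have hsimp : θ / c * (1 / cos (c * t) ^ 2 * c) = θ * (1 / cos (c * t) ^ 2) := by
        field_simp
      rw [hsimp]
      nlinarith [mul_le_mul_of_nonneg_right h1 hE.le]
  -- hence V t ≤ V 0 * exp (-(θ/c) tan (c t)) on Ico 0 Tp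
  have hbound : ∀ t ∈ Ico (0 : ℝ) Tp, V t ≤ V 0 * exp (-(θ / c * tan (c * t))) := by
    intro t ht
    have h0 : (0 : ℝ) ∈ Ico (0 : ℝ) Tp := ⟨le_refl 0, hTp⟩
    have hg0 : g 0 = V 0 := by simp [hg_def]
    have := hanti h0 ht ht.1
    rw [hg0] at this
    have hE : 0 < exp (-(θ / c * tan (c * t))) := exp_pos _
    have : g t * exp (-(θ / c * tan (c * t))) ≤ V 0 * exp (-(θ / c * tan (c * t))) :=
      mul_le_mul_of_nonneg_right this hE.le
    calc V t = g t * exp (-(θ / c * tan (c * t))) := by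
            rw [hg_def]; simp only [mul_assoc, ← Real.exp_add]; simp
      _ ≤ V 0 * exp (-(θ / c * tan (c * t))) := this
  -- the bound tends to 0
  have h1 : Tendsto (fun t => c * t) (𝓝[<] Tp) (𝓝[<] (π / 2)) := by
    apply tendsto_nhdsWithin_of_tendsto_nhds_of_eventually_within
    · rw [← hcTp]
      exact ((continuous_const.mul continuous_id).tendsto Tp).mono_left nhdsWithin_le_nhds
    · filter_upwards [eventually_mem_nhdsWithin] with t (ht : t < Tp)
      rw [mem_Iio, ← hcTp]
      exact mul_lt_mul_of_pos_left ht hc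
  have htanTop : Tendsto (fun t => tan (c * t)) (𝓝[<] Tp) atTop :=
    Real.tendsto_tan_pi_div_two.comp h1
  have hmulTop : Tendsto (fun t => θ / c * tan (c * t)) (𝓝[<] Tp) atTop :=
    htanTop.const_mul_atTop (div_pos hθ hc)
  have hexp0 : Tendsto (fun t => exp (-(θ / c * tan (c * t)))) (𝓝[<] Tp) (𝓝 0) :=
    Real.tendsto_exp_atBot.comp (tendsto_neg_atTop_atBot.comp hmulTop)
  have hB : Tendsto (fun t => V 0 * exp (-(θ / c * tan (c * t)))) (𝓝[<] Tp) (𝓝 0) := by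
    simpa using hexp0.const_mul (V 0)
  -- squeeze for ‖x t‖²
  have hmem : ∀ᶠ t in 𝓝[<] Tp, t ∈ Ico 0 Tp := by
    filter_upwards [Ioo_mem_nhdsLT_of_mem (Set.mem_Ioc.mpr ⟨hTp, le_refl Tp⟩)] with t ht
    exact Ioo_subset_Ico_self ht
  have hsq : Tendsto (fun t => ‖x t‖ ^ 2) (𝓝[<] Tp) (𝓝 0) := by
    apply squeeze_zero' (by filter_upwards with t; positivity)
    · filter_upwards [hmem] with t ht
      have h1 := hVx t ht
      have h2 := hbound t ht
      calc ‖x t‖ ^ 2 = (M * ‖x t‖ ^ 2) / M := by field_simp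
        _ ≤ (V 0 * exp (-(θ / c * tan (c * t)))) / M :=
            (div_le_div_iff_of_pos_right hM).mpr (h1.trans h2)
    · simpa using hB.div_const M
  have hnorm : Tendsto (fun t => ‖x t‖) (𝓝[<] Tp) (𝓝 0) := by
    have := (Real.continuous_sqrt.tendsto 0).comp hsq
    simpa [Function.comp_def, Real.sqrt_sq (norm_nonneg _)] using this
  exact tendsto_zero_iff_norm_tendsto_zero.mpr hnorm
end

section
/- Let T_p > 0 and define k(t) = sec²(πt/(2T_p)) for t ∈ [0, T_p). Let E be a finite-dimensional real normed vector space, let x : [0, T_p) → E, let M > 0 and θ > 0, and let V : [0, T_p) → ℝ be differentiable with V(t) ≥ M·‖x(t)‖² for all t ∈ [0, T_p) and V'(t) ≤ −θ·k(t)·V(t) for all t ∈ [0, T_p). Then for all t ∈ [0, T_p): 0 ≤ ‖x(t)‖² ≤ M⁻¹·exp(−(2θT_p/π)·tan(πt/(2T_p)))·V(0). -/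
open Real Set Filter

/-- the explicit bound `0 ≤ ‖x(t)‖² ≤ M⁻¹ exp(-(2θT_p/π) tan(π t/(2T_p))) V(0)`
from the Lyapunov inequality `V' ≤ -θ k V`, `V ≥ M‖x‖²`. -/
theorem stmt3 {E : Type*} [NormedAddCommGroup E] [NormedSpace ℝ E] [FiniteDimensional ℝ E]
    (Tp : ℝ) (hTp : 0 < Tp) (M θ : ℝ) (hM : 0 < M) (hθ : 0 < θ)
    (x : ℝ → E) (V V' : ℝ → ℝ)
    (hVx : ∀ t ∈ Ico (0 : ℝ) Tp, M * ‖x t‖ ^ 2 ≤ V t)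
    (hV : ∀ t ∈ Ico (0 : ℝ) Tp, HasDerivWithinAt V (V' t) (Ico 0 Tp) t)
    (hV' : ∀ t ∈ Ico (0 : ℝ) Tp, V' t ≤ -θ * (1 / cos (π * t / (2 * Tp)) ^ 2) * V t) :
    ∀ t ∈ Ico (0 : ℝ) Tp,
      0 ≤ ‖x t‖ ^ 2 ∧
      ‖x t‖ ^ 2 ≤ M⁻¹ * exp (-(2 * θ * Tp / π) * tan (π * t / (2 * Tp))) * V 0 := by
  have hπ : (0:ℝ) < π := Real.pi_pos
  set c : ℝ := 2 * θ * Tp / π with hc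
  set g : ℝ → ℝ := fun t => c * tan (π * t / (2 * Tp)) with hg
  set F : ℝ → ℝ := fun t => V t * exp (g t) with hFdef
  have hcos : ∀ t ∈ Ico (0 : ℝ) Tp, 0 < cos (π * t / (2 * Tp)) := by
    intro t ht
    apply Real.cos_pos_of_mem_Ioo
    constructor
    · have : (0:ℝ) ≤ π * t / (2 * Tp) :=
        div_nonneg (mul_nonneg hπ.le ht.1) (by linarith)
      linarith [Real.pi_pos]
    · rw [div_lt_div_iff₀ (by linarith) (by norm_num : (0:ℝ) < 2)]
      nlinarith [ht.2]
  -- derivative of F within Ico 0 Tp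
  have hF' : ∀ t ∈ Ico (0 : ℝ) Tp,
      HasDerivWithinAt F ((V' t + θ * (1 / cos (π * t / (2 * Tp)) ^ 2) * V t) * exp (g t))
        (Ico 0 Tp) t := by
    intro t ht
    have hcost := hcos t ht
    have htan : HasDerivAt (fun s => tan (π * s / (2 * Tp)))
        ((1 / cos (π * t / (2 * Tp)) ^ 2) * (π / (2 * Tp))) t := by
      have h1 : HasDerivAt (fun s : ℝ => π * s / (2 * Tp)) (π / (2 * Tp)) t := by
        simpa using ((hasDerivAt_id t).const_mul π).div_const (2 * Tp)
      exact (Real.hasDerivAt_tan hcost.ne').comp t h1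
    have hgd : HasDerivAt g (θ * (1 / cos (π * t / (2 * Tp)) ^ 2)) t := by
      have := htan.const_mul c
      refine this.congr_deriv ?_
      rw [hc]
      field_simp
    have hexp : HasDerivAt (fun s => exp (g s))
        (exp (g t) * (θ * (1 / cos (π * t / (2 * Tp)) ^ 2))) t := by
      exact (Real.hasDerivAt_exp (g t)).comp t hgd
    have := (hV t ht).mul hexp.hasDerivWithinAt
    refine this.congr_deriv ?_
    ring
  have hcont : ContinuousOn F (Ico 0 Tp) := fun t ht => (hF' t ht).continuousWithinAt
  have hanti : AntitoneOn F (Ico 0 Tp) := by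
    apply antitoneOn_of_deriv_nonpos (convex_Ico 0 Tp) hcont
    · intro s hs
      rw [interior_Ico] at hs
      exact ((hF' s (Ioo_subset_Ico_self hs)).hasDerivAt
        (Ico_mem_nhds hs.1 hs.2)).differentiableAt.differentiableWithinAt
    · intro s hs
      rw [interior_Ico] at hs
      have hs' : s ∈ Ico (0:ℝ) Tp := Ioo_subset_Ico_self hs
      have hd := (hF' s hs').hasDerivAt (Ico_mem_nhds hs.1 hs.2)
      rw [hd.deriv]
      have h1 : V' s + θ * (1 / cos (π * s / (2 * Tp)) ^ 2) * V s ≤ 0 := by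
        have := hV' s hs'
        linarith
      exact mul_nonpos_of_nonpos_of_nonneg h1 (exp_nonneg _)
  intro t ht
  refine ⟨by positivity, ?_⟩
  have h0 : (0:ℝ) ∈ Ico (0:ℝ) Tp := ⟨le_refl 0, hTp⟩
  have hFt : F t ≤ F 0 := hanti h0 ht ht.1
  have hF0 : F 0 = V 0 := by
    simp [hFdef, hg]
  have hVt : V t ≤ exp (-c * tan (π * t / (2 * Tp))) * V 0 := by
    have hexppos : 0 < exp (g t) := exp_pos _
    rw [hF0] at hFt
    have h1 : V t * exp (g t) ≤ V 0 := hFt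
    rw [neg_mul, Real.exp_neg, inv_mul_eq_div, le_div_iff₀ hexppos]
    exact h1
  have := hVx t ht
  calc ‖x t‖ ^ 2 ≤ M⁻¹ * V t := by
        rw [le_inv_mul_iff₀ hM]; linarith
    _ ≤ M⁻¹ * (exp (-c * tan (π * t / (2 * Tp))) * V 0) :=
        mul_le_mul_of_nonneg_left hVt (by positivity)
    _ = M⁻¹ * exp (-c * tan (π * t / (2 * Tp))) * V 0 := by ring
end

section
/- Let N ≥ 1, let n₁, …, n_N be positive integers with n = Σᵢ nᵢ, and consider ℝ^{Nn} whose elements X consist of N blocks x^i ∈ ℝⁿ. Let 𝓡ᵢ ∈ ℝ^{nᵢ×n} be the selection matrix extracting the i-th sub-block of a vector in ℝⁿ, and let 𝓡 ∈ ℝ^{n×Nn} be the block-diagonal matrix diag(𝓡₁, …, 𝓡_N). Let P_C = (1/N)(1_N 1_N^⊤) ⊗ I_n, and for X ∈ ℝ^{Nn} write X^∥ = P_C X = 1_N ⊗ x (where x = (1/N)Σᵢ x^i) and X^⊥ = X − X^∥. Let F : ℝ^{Nn} → ℝⁿ be l-Lipschitz continuous, and suppose the map x ↦ F(1_N ⊗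 x) from ℝⁿ to ℝⁿ is μ-strongly monotone, with l, μ > 0. Then for every X ∈ ℝ^{Nn} and x* ∈ ℝⁿ, setting X̃ = 1_N ⊗ x*: (X − X̃)^⊤ 𝓡^⊤ (F(X) − F(X̃)) ≥ −l·‖X^⊥‖² − 2l·‖X^⊥‖·‖X^∥ − X̃‖ + (μ/N)·‖X^∥ − X̃‖². -/
open Finset
open scoped RealInnerProductSpace

noncomputable section

/-- `ℝⁿ` with `n = ∑ᵢ nᵢ`, realized as the `ℓ²`-product of the players'
individual action spaces `ℝ^{nᵢ}`. -/
abbrev Rn (N : ℕ) (nd : Fin N → ℕ) :=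
  PiLp 2 (fun i : Fin N => EuclideanSpace ℝ (Fin (nd i)))

/-- `ℝ^{Nn}`: `N` stacked copies (the estimate blocks `x¹, …, x^N`) of `ℝⁿ`. -/
abbrev Big (N : ℕ) (nd : Fin N → ℕ) := PiLp 2 (fun _ : Fin N => Rn N nd)

/-- The selection map `𝓡 = diag(𝓡₁, …, 𝓡_N) : ℝ^{Nn} → ℝⁿ`, where `𝓡ᵢ`
extracts the `i`-th sub-block: `(𝓡 X)ᵢ = (xⁱ)ᵢ`. -/
def selR {N : ℕ} {nd : Fin N → ℕ} (X : Big N nd) : Rn N nd := WithLp.toLp 2 (fun i => X i i)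

lemma norm_selR_le {N : ℕ} {nd : Fin N → ℕ} (Z : Big N nd) : ‖selR Z‖ ≤ ‖Z‖ := by
  have h1 : ‖selR Z‖ ^ 2 ≤ ‖Z‖ ^ 2 := by
    simp only [PiLp.norm_sq_eq_of_L2, selR]
    refine Finset.sum_le_sum fun i _ => ?_
    exact Finset.single_le_sum (f := fun j => ∑ k, ‖Z i j k‖ ^ 2)
      (fun j _ => Finset.sum_nonneg fun k _ => sq_nonneg _) (Finset.mem_univ i)
  calc ‖selR Z‖ = Real.sqrt (‖selR Z‖ ^ 2) := (Real.sqrt_sq (norm_nonneg _)).symm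
    _ ≤ Real.sqrt (‖Z‖ ^ 2) := Real.sqrt_le_sqrt h1
    _ = ‖Z‖ := Real.sqrt_sq (norm_nonneg _)

lemma norm_const_sq {N : ℕ} {nd : Fin N → ℕ} (v : Rn N nd) (Y : Big N nd)
    (hY : Y = WithLp.toLp 2 (fun _ => v)) : ‖Y‖ ^ 2 = N * ‖v‖ ^ 2 := by
  rw [PiLp.norm_sq_eq_of_L2]
  have h : ∀ i : Fin N, ‖Y i‖ ^ 2 = ‖v‖ ^ 2 := fun i => by rw [hY]
  rw [Finset.sum_congr rfl fun i _ => h i, Finset.sum_const, Finset.card_univ,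
    Fintype.card_fin, nsmul_eq_mul]


/-- the estimate for `V̇₁`. If the extended pseudo-gradient
`F` is `l`-Lipschitz and `x ↦ F(1_N ⊗ x)` is `μ`-strongly monotone, then with
`X̃ = 1_N ⊗ x*`, `X^∥ = 1_N ⊗ ((1/N)∑ᵢ xⁱ)`, `X^⊥ = X - X^∥`:
`(X - X̃)ᵀ 𝓡ᵀ (F(X) - F(X̃)) ≥ -l‖X^⊥‖² - 2l‖X^⊥‖‖X^∥ - X̃‖ + (μ/N)‖X^∥ - X̃‖²`. -/
theorem stmt10 {N : ℕ} (hN : 1 ≤ N) (nd : Fin N → ℕ) (hnd : ∀ i, 1 ≤ nd i)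
    (l μ : ℝ) (hl : 0 < l) (hμ : 0 < μ)
    (F : Big N nd → Rn N nd)
    (hLip : ∀ X Y : Big N nd, ‖F X - F Y‖ ≤ l * ‖X - Y‖)
    (hMono : ∀ x y : Rn N nd,
      μ * ‖x - y‖ ^ 2 ≤ ⟪x - y, F (WithLp.toLp 2 (fun _ => x)) - F (WithLp.toLp 2 (fun _ => y))⟫)
    (X : Big N nd) (xstar : Rn N nd)
    (Xt : Big N nd) (hXt : Xt = WithLp.toLp 2 (fun _ => xstar))
    (Xpar : Big N nd) (hXpar : Xpar = WithLp.toLp 2 (fun _ => (N : ℝ)⁻¹ • ∑ i, X i))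
    (Xperp : Big N nd) (hXperp : Xperp = X - Xpar) :
    -(l * ‖Xperp‖ ^ 2) - 2 * l * ‖Xperp‖ * ‖Xpar - Xt‖ + μ / N * ‖Xpar - Xt‖ ^ 2
      ≤ ⟪selR (X - Xt), F X - F Xt⟫ := by
  set xb : Rn N nd := (N : ℝ)⁻¹ • ∑ i, X i with hxb
  set v : Rn N nd := xb - xstar with hvdef
  -- constant function facts
  have hconst : Xpar - Xt = WithLp.toLp 2 (fun _ => v) := by
    subst hXpar hXt; rfl
  have hnv : ‖Xpar - Xt‖ ^ 2 = N * ‖v‖ ^ 2 := by exact norm_const_sq v _ hconst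
  have hNpos : (0:ℝ) < N := by exact_mod_cast Nat.lt_of_lt_of_le Nat.zero_lt_one hN
  have hN1 : (1:ℝ) ≤ N := by exact_mod_cast hN
  have hvle : ‖v‖ ≤ ‖Xpar - Xt‖ := by
    have h1 : ‖v‖ ^ 2 ≤ ‖Xpar - Xt‖ ^ 2 := by nlinarith [sq_nonneg ‖v‖]
    calc ‖v‖ = Real.sqrt (‖v‖ ^ 2) := (Real.sqrt_sq (norm_nonneg _)).symm
      _ ≤ Real.sqrt (‖Xpar - Xt‖ ^ 2) := Real.sqrt_le_sqrt h1
      _ = ‖Xpar - Xt‖ := Real.sqrt_sq (norm_nonneg _)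
  -- decomposition of selR (X - Xt)
  have hsel : selR (X - Xt) = selR Xperp + v := by
    subst hXt hXpar hXperp
    ext i : 1
    show (X i - xstar) i = ((X i - xb) i) + (xb - xstar) i
    simp
  -- F decomposition
  have hFdec : F X - F Xt = (F Xpar - F Xt) + (F X - F Xpar) := by abel
  -- bound on ‖X - Xt‖
  have hXXt : ‖X - Xt‖ ≤ ‖Xperp‖ + ‖Xpar - Xt‖ := by
    have : X - Xt = Xperp + (Xpar - Xt) := by rw [hXperp]; abel
    rw [this]; exact norm_add_le _ _
  have hperpnorm : ‖X - Xpar‖ = ‖Xperp‖ := by rw [hXperp]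
  -- term 1
  have ht1 : -(‖Xperp‖ * (l * (‖Xperp‖ + ‖Xpar - Xt‖)))
      ≤ ⟪selR Xperp, F X - F Xt⟫ := by
    have habs := abs_real_inner_le_norm (selR Xperp) (F X - F Xt)
    have h2 : ‖selR Xperp‖ * ‖F X - F Xt‖ ≤ ‖Xperp‖ * (l * (‖Xperp‖ + ‖Xpar - Xt‖)) := by
      have hle := norm_selR_le Xperp
      have hF : ‖F X - F Xt‖ ≤ l * (‖Xperp‖ + ‖Xpar - Xt‖) := by
        calc ‖F X - F Xt‖ ≤ l * ‖X - Xt‖ := hLip X Xt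
          _ ≤ l * (‖Xperp‖ + ‖Xpar - Xt‖) := by nlinarith
      exact mul_le_mul hle hF (norm_nonneg _) (norm_nonneg _)
    have := neg_abs_le ⟪selR Xperp, F X - F Xt⟫
    linarith [abs_nonneg ⟪selR Xperp, F X - F Xt⟫]
  -- term 2a: monotonicity
  have ht2a : μ * ‖v‖ ^ 2 ≤ ⟪v, F Xpar - F Xt⟫ := by
    have := hMono xb xstar
    rw [hXpar, hXt]; exact this
  -- term 2b
  have ht2b : -(‖Xpar - Xt‖ * (l * ‖Xperp‖)) ≤ ⟪v, F X - F Xpar⟫ := by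
    have habs := abs_real_inner_le_norm v (F X - F Xpar)
    have h2 : ‖v‖ * ‖F X - F Xpar‖ ≤ ‖Xpar - Xt‖ * (l * ‖Xperp‖) := by
      have hF : ‖F X - F Xpar‖ ≤ l * ‖Xperp‖ := by
        calc ‖F X - F Xpar‖ ≤ l * ‖X - Xpar‖ := hLip X Xpar
          _ = l * ‖Xperp‖ := by rw [hperpnorm]
      exact mul_le_mul hvle hF (norm_nonneg _) (norm_nonneg _)
    have := neg_abs_le ⟪v, F X - F Xpar⟫
    linarith
  -- combine
  have hμterm : μ / N * ‖Xpar - Xt‖ ^ 2 = μ * ‖v‖ ^ 2 := by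
    rw [hnv]; field_simp
  have hgoal : -(l * ‖Xperp‖ ^ 2) - 2 * l * ‖Xperp‖ * ‖Xpar - Xt‖
        + μ / N * ‖Xpar - Xt‖ ^ 2
      = -(‖Xperp‖ * (l * (‖Xperp‖ + ‖Xpar - Xt‖)))
        + (μ * ‖v‖ ^ 2 + -(‖Xpar - Xt‖ * (l * ‖Xperp‖))) := by
    rw [hμterm]; ring
  rw [hgoal]
  rw [hsel]
  rw [hFdec]
  rw [inner_add_left, inner_add_right, inner_add_right]
  rw [hFdec, inner_add_right] at ht1
  linarith [ht1, ht2a, ht2b]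


end
end
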